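/- Let n, d, a₁, a₂, m be natural numbers with a₁ ≤ d ≤ n and a₂ + d + 1 ≤ n. Then for every real number x, ∑_{j=a₁+a₂}^{n−m} C(n−j, m)·[C(d−a₁, j−a₁−a₂−1) − C(d−a₁, j−a₁−a₂)]·x^{n−j−m} = (1/m!)·(iteratedDeriv m g)(x), where g : ℝ → ℝ is the polynomial function g(x) = (1−x)·x^{n−d−a₂−1}·(1+x)^{d−a₁}, the indices inside the binomial coefficients are treated as integers, and binomial coefficients with negative lower index are taken to be zero. -/

import Mathlib

/-- Binomial coefficient `C(p, q)` with integer lower index `q`, taken to be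
zero when `q < 0` (and, via `Nat.choose`, zero when `q > p`). -/
def zchoose (p : ℕ) (q : ℤ) : ℕ :=
  if 0 ≤ q then p.choose q.toNat else 0

lemma zchoose_eq_zero (D : ℕ) (q : ℤ) (h : q < 0 ∨ (D : ℤ) < q) : zchoose D q = 0 := by
  unfold zchoose
  split_ifs with h0
  · exact Nat.choose_eq_zero_of_lt (by omega)
  · rfl

lemma zchoose_symm (D : ℕ) (q : ℤ) : zchoose D ((D : ℤ) - q) = zchoose D q := by
  unfold zchoose
  split_ifs with h1 h2 h2
  · rcases le_or_gt q (D : ℤ) with hq | hq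
    · have : ((D : ℤ) - q).toNat = D - q.toNat := by omega
      rw [this, Nat.choose_symm (by omega)]
    · rw [Nat.choose_eq_zero_of_lt (by omega), Nat.choose_eq_zero_of_lt (by omega)]
  · exact Nat.choose_eq_zero_of_lt (by omega)
  · exact (Nat.choose_eq_zero_of_lt (by omega)).symm
  · rfl

lemma sum_zchoose (D L M : ℕ) (hM : L + D + 1 ≤ M) (y : ℝ) :
    ∑ t ∈ Finset.range M, (zchoose D ((t : ℤ) - L) : ℝ) * y ^ t
      = y ^ L * (1 + y) ^ D := by
  have h1 : (1 + y) ^ D = ∑ i ∈ Finset.range (D + 1), y ^ i * (D.choose i : ℝ) := by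
    rw [add_comm, add_pow]; simp
  calc ∑ t ∈ Finset.range M, (zchoose D ((t : ℤ) - L) : ℝ) * y ^ t
      = ∑ t ∈ (Finset.range (D + 1)).image (fun i => L + i),
          (zchoose D ((t : ℤ) - L) : ℝ) * y ^ t := by
        refine (Finset.sum_subset ?_ ?_).symm
        · intro t ht
          simp only [Finset.mem_image, Finset.mem_range] at ht
          obtain ⟨i, hi, rfl⟩ := ht
          exact Finset.mem_range.mpr (by omega)
        · intro t ht hnt
          have hz : ((t : ℤ) - L < 0) ∨ ((D : ℤ) < (t : ℤ) - L) := by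
            by_contra hc
            push_neg at hc
            exact hnt (Finset.mem_image.mpr
              ⟨t - L, Finset.mem_range.mpr (by omega), by omega⟩)
          rw [zchoose_eq_zero D _ hz]
          simp
    _ = ∑ i ∈ Finset.range (D + 1),
          (zchoose D (((L + i : ℕ) : ℤ) - L) : ℝ) * y ^ (L + i) :=
        Finset.sum_image (by intro a _ b _ h; simp only at h; omega)
    _ = ∑ i ∈ Finset.range (D + 1), y ^ L * (y ^ i * (D.choose i : ℝ)) := by
        refine Finset.sum_congr rfl fun i hi => ?_
        have hz : zchoose D (((L + i : ℕ) : ℤ) - L) = D.choose i := by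
          unfold zchoose
          rw [if_pos (by omega)]
          congr 1
          omega
        rw [hz, pow_add]
        ring
    _ = y ^ L * (1 + y) ^ D := by rw [h1, Finset.mul_sum]

lemma iteratedDeriv_polyEval (m : ℕ) (p : Polynomial ℝ) (x : ℝ) :
    iteratedDeriv m (fun y => Polynomial.eval y p) x
      = Polynomial.eval x (Polynomial.derivative^[m] p) := by
  induction m generalizing p x with
  | zero => simp
  | succ m ih =>
    rw [iteratedDeriv_succ']
    have hd : deriv (fun y => Polynomial.eval y p)
        = fun y => Polynomial.eval y (Polynomial.derivative p) := by
      funext y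
      exact (p.hasDerivAt y).deriv
    rw [hd, ih, Function.iterate_succ_apply]

lemma key_sum (D K m : ℕ) (x : ℝ) :
    ∑ t ∈ Finset.range (K + D + 2),
      (t.choose m : ℝ) *
        ((zchoose D ((t : ℤ) - K) : ℝ) - (zchoose D ((t : ℤ) - K - 1) : ℝ)) * x ^ (t - m)
    = (1 / (m.factorial : ℝ)) *
        iteratedDeriv m (fun y : ℝ => (1 - y) * y ^ K * (1 + y) ^ D) x := by
  set c : ℕ → ℝ := fun t =>
    (zchoose D ((t : ℤ) - K) : ℝ) - (zchoose D ((t : ℤ) - K - 1) : ℝ) with hc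
  set P : Polynomial ℝ :=
    ∑ t ∈ Finset.range (K + D + 2), Polynomial.C (c t) * Polynomial.X ^ t with hP
  have hfun : (fun y : ℝ => (1 - y) * y ^ K * (1 + y) ^ D)
      = fun y => Polynomial.eval y P := by
    funext y
    simp only [hP, Polynomial.eval_finset_sum, Polynomial.eval_mul, Polynomial.eval_C,
      Polynomial.eval_pow, Polynomial.eval_X]
    have hsplit : ∑ t ∈ Finset.range (K + D + 2), c t * y ^ t
        = (∑ t ∈ Finset.range (K + D + 2), (zchoose D ((t : ℤ) - K) : ℝ) * y ^ t)
          - ∑ t ∈ Finset.range (K + D + 2),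
              (zchoose D ((t : ℤ) - ((K + 1 : ℕ) : ℤ)) : ℝ) * y ^ t := by
      rw [← Finset.sum_sub_distrib]
      refine Finset.sum_congr rfl fun t _ => ?_
      have harg : (t : ℤ) - K - 1 = (t : ℤ) - ((K + 1 : ℕ) : ℤ) := by push_cast; ring
      rw [hc]
      simp only [harg]
      ring
    rw [hsplit, sum_zchoose D K (K + D + 2) (by omega) y,
      sum_zchoose D (K + 1) (K + D + 2) (by omega) y]
    ring
  rw [hfun, iteratedDeriv_polyEval]
  have heval : Polynomial.eval x (Polynomial.derivative^[m] P)
      = ∑ t ∈ Finset.range (K + D + 2), c t * ((t.descFactorial m : ℝ) * x ^ (t - m)) := by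
    rw [hP, Polynomial.iterate_derivative_sum, Polynomial.eval_finset_sum]
    refine Finset.sum_congr rfl fun t _ => ?_
    rw [Polynomial.iterate_derivative_C_mul, Polynomial.iterate_derivative_X_pow_eq_natCast_mul]
    simp [mul_assoc]
  rw [heval, Finset.mul_sum]
  refine Finset.sum_congr rfl fun t _ => ?_
  rw [Nat.descFactorial_eq_factorial_mul_choose]
  have hm : (m.factorial : ℝ) ≠ 0 := Nat.cast_ne_zero.mpr m.factorial_ne_zero
  push_cast
  field_simp
  ring

/-- For natural numbers `n, d, a₁, a₂, m` with `a₁ ≤ d ≤ n` and `a₂ + d + 1 ≤ n`,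
and every real `x`,
`∑_{j=a₁+a₂}^{n-m} C(n-j, m) · [C(d-a₁, j-a₁-a₂-1) - C(d-a₁, j-a₁-a₂)] · x^(n-j-m)`
equals `(1/m!) · (d^m/dx^m) [(1-x) x^(n-d-a₂-1) (1+x)^(d-a₁)]`, where the indices
inside the binomial coefficients are treated as integers, binomial coefficients
with negative lower index being zero. -/
theorem sum_gamma_choose_eq_iteratedDeriv
    (n d a₁ a₂ m : ℕ) (h₁ : a₁ ≤ d) (h₂ : d ≤ n) (h₃ : a₂ + d + 1 ≤ n) (x : ℝ) :
    ∑ j ∈ Finset.Icc (a₁ + a₂) (n - m),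
      ((n - j).choose m : ℝ) *
        ((zchoose (d - a₁) ((j : ℤ) - a₁ - a₂ - 1) : ℝ)
          - (zchoose (d - a₁) ((j : ℤ) - a₁ - a₂) : ℝ)) * x ^ (n - j - m)
    = (1 / (m.factorial : ℝ)) *
        iteratedDeriv m
          (fun y : ℝ => (1 - y) * y ^ (n - d - a₂ - 1) * (1 + y) ^ (d - a₁)) x := by
  set D := d - a₁ with hD
  set K := n - d - a₂ - 1 with hK
  have hKD : K + D + 1 = n - (a₁ + a₂) := by omega
  rw [← key_sum D K m x]
  rcases le_or_gt m n with hmn | hmn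
  · -- reindex via t = n - j
    have step1 : ∑ j ∈ Finset.Icc (a₁ + a₂) (n - m),
        ((n - j).choose m : ℝ) *
          ((zchoose D ((j : ℤ) - a₁ - a₂ - 1) : ℝ)
            - (zchoose D ((j : ℤ) - a₁ - a₂) : ℝ)) * x ^ (n - j - m)
        = ∑ t ∈ Finset.Icc m (K + D + 1),
            (t.choose m : ℝ) *
              ((zchoose D ((t : ℤ) - K) : ℝ) - (zchoose D ((t : ℤ) - K - 1) : ℝ))
              * x ^ (t - m) := by
      refine Finset.sum_nbij' (fun j => n - j) (fun t => n - t) ?_ ?_ ?_ ?_ ?_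
      · intro j hj
        simp only [Finset.mem_Icc] at hj ⊢
        omega
      · intro t ht
        simp only [Finset.mem_Icc] at ht ⊢
        omega
      · intro j hj
        simp only [Finset.mem_Icc] at hj
        show n - (n - j) = j
        omega
      · intro t ht
        simp only [Finset.mem_Icc] at ht
        show n - (n - t) = t
        omega
      · intro j hj
        simp only [Finset.mem_Icc] at hj
        have hjn : j ≤ n := by omega
        have e1 : ((n - j : ℕ) : ℤ) - K = (D : ℤ) - ((j : ℤ) - a₁ - a₂ - 1) := by omega
        have e2 : ((n - j : ℕ) : ℤ) - K - 1 = (D : ℤ) - ((j : ℤ) - a₁ - a₂) := by omega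
        rw [e2, zchoose_symm, e1, zchoose_symm]
    rw [step1]
    refine Finset.sum_subset ?_ ?_
    · intro t ht
      simp only [Finset.mem_Icc] at ht
      exact Finset.mem_range.mpr (by omega)
    · intro t ht hnt
      simp only [Finset.mem_Icc, Finset.mem_range, not_and, not_le] at ht hnt
      have htm : t < m := by
        by_contra hcon
        push_neg at hcon
        have := hnt hcon
        omega
      rw [Nat.choose_eq_zero_of_lt htm]
      simp
  · -- m > n : both sides are zero
    have hL : ∑ j ∈ Finset.Icc (a₁ + a₂) (n - m),
        ((n - j).choose m : ℝ) *
          ((zchoose D ((j : ℤ) - a₁ - a₂ - 1) : ℝ)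
            - (zchoose D ((j : ℤ) - a₁ - a₂) : ℝ)) * x ^ (n - j - m) = 0 := by
      refine Finset.sum_eq_zero fun j hj => ?_
      rw [Nat.choose_eq_zero_of_lt (by omega)]
      simp
    have hR : ∑ t ∈ Finset.range (K + D + 2),
        (t.choose m : ℝ) *
          ((zchoose D ((t : ℤ) - K) : ℝ) - (zchoose D ((t : ℤ) - K - 1) : ℝ))
          * x ^ (t - m) = 0 := by
      refine Finset.sum_eq_zero fun t ht => ?_
      simp only [Finset.mem_range] at ht
      rw [Nat.choose_eq_zero_of_lt (by omega)]
      simp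
    rw [hL, hR]
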